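/- Let Q be a finite acyclic quiver and R a right Noetherian ring. Let M_R(Q) be the subcategory of rep(Q,R) of representations isomorphic to finite direct sums of representations of the form e^v_λ(M) with v a vertex and M ∈ mod-R. Then M_R(Q) is contravariantly finite in rep(Q,R): for every representation X, the canonical map f_X: ⊕_{v ∈ Q₀} e^v_λ(X_v) → X is a right M_R(Q)-approximation. -/

import Mathlib

/-! **Statement 10.** Let `Q` be a finite acyclic quiver and `R` a right
Noetherian ring.  Let `M_R(Q)` be the subcategory of `rep(Q,R)` of
representations isomorphic to finite direct sums of representations of the form
`e^v_λ(M)` with `v` a vertex and `M ∈ mod-R`.  Then `M_R(Q)` is contravariantly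
finite in `rep(Q,R)`: for every representation `X`, the canonical map
`f_X : ⊕_{v ∈ Q₀} e^v_λ(X_v) → X` is a right `M_R(Q)`-approximation.

Right `R`-modules are `Rᵐᵒᵖ`-modules; representations and their morphisms are
given concretely, and `e^v_λ(M)` has at `w` the module `(Path v w) →₀ M`. -/

open scoped DirectSum Classical

noncomputable section

variable (A V : Type) [Ring A] [Quiver.{0} V]

/-- A representation of the quiver `V` by `A`-modules. -/
structure QRep where
  M : V → Type
  [acg : ∀ v, AddCommGroup (M v)]
  [mod : ∀ v, Module A (M v)]
  act : ∀ {a b : V}, (a ⟶ b) → (M a →ₗ[A] M b)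

attribute [instance] QRep.acg QRep.mod

variable {A V}

/-- A morphism of representations. -/
structure QHom (D E : QRep A V) where
  app : ∀ v, D.M v →ₗ[A] E.M v
  natural : ∀ {a b : V} (e : a ⟶ b),
    (E.act e).comp (app a) = (app b).comp (D.act e)

/-- The action of a path on a representation. -/
def QRep.pact (D : QRep A V) : ∀ {a b : V}, Quiver.Path a b → (D.M a →ₗ[A] D.M b)
  | _, _, Quiver.Path.nil => LinearMap.id
  | _, _, Quiver.Path.cons p e => (D.act e).comp (D.pact p)

/-- The finite direct sum `⊕_i e^{v i}_λ(N i)` of representations of the form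
`e^v_λ(M)`. -/
def sumRep (ι : Type) (v : ι → V) (N : ι → ModuleCat.{0} A) : QRep A V where
  M := fun w => ⨁ (i : ι), (Quiver.Path (v i) w →₀ N i)
  act := fun e => DirectSum.toModule A ι _ fun i =>
    (DirectSum.lof A ι (fun i' => Quiver.Path (v i') _ →₀ N i') i).comp
      (Finsupp.lmapDomain (N i) A (fun p => p.comp e.toPath))

/-- `D` belongs to `M_R(Q)`: it is isomorphic to a finite direct sum of
representations `e^v_λ(M)` with `M` finitely generated. -/
def MemMRQ (D : QRep A V) : Prop :=
  ∃ (ι : Type) (_ : Fintype ι) (v : ι → V) (N : ι → ModuleCat.{0} A)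
    (_ : ∀ i, Module.Finite A (N i))
    (F : QHom D (sumRep ι v N)) (G : QHom (sumRep ι v N) D),
    (∀ w x, G.app w (F.app w x) = x) ∧ (∀ w y, F.app w (G.app w y) = y)

/-- The canonical map `f_X : ⊕_{v ∈ Q₀} e^v_λ(X_v) → X`, whose `v`-th component
corresponds to the identity of `X_v` under the adjunction. -/
def canonicalApprox (X : QRep A V) (w : V) :
    (sumRep V id (fun u => ModuleCat.of A (X.M u))).M w →ₗ[A] X.M w :=
  DirectSum.toModule A V (X.M w) fun u =>
    Finsupp.lsum ℕ fun p : Quiver.Path (id u) w => X.pact p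

/-! ### Auxiliary lemmas -/

@[simp] lemma QRep.pact_nil (D : QRep A V) (a : V) :
    D.pact (Quiver.Path.nil : Quiver.Path a a) = LinearMap.id := by
  simp [QRep.pact]

@[simp] lemma QRep.pact_cons (D : QRep A V) {a b c : V}
    (p : Quiver.Path a b) (e : b ⟶ c) :
    D.pact (p.cons e) = (D.act e).comp (D.pact p) := by
  simp [QRep.pact]

lemma QHom.pact_natural {D E : QRep A V} (f : QHom D E) {a b : V}
    (p : Quiver.Path a b) (x : D.M a) :
    f.app b (D.pact p x) = E.pact p (f.app a x) := by
  induction p with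
  | nil => simp
  | cons q e ih =>
      have := congrArg (fun g : D.M _ →ₗ[A] E.M _ => g (D.pact q x)) (f.natural e)
      simp only [LinearMap.comp_apply] at this
      simp [LinearMap.comp_apply, ← this, ih]

lemma sumRep_act_lof_single (ι : Type) (v : ι → V) (N : ι → ModuleCat.{0} A)
    {a b : V} (e : a ⟶ b) (i : ι) (p : Quiver.Path (v i) a) (n : N i) :
    (sumRep ι v N).act e
      (DirectSum.lof A ι (fun i' => Quiver.Path (v i') a →₀ N i') i
        (Finsupp.single p n)) =
    DirectSum.lof A ι (fun i' => Quiver.Path (v i') b →₀ N i') i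
      (Finsupp.single (p.comp e.toPath) n) := by
  show (DirectSum.toModule A ι (⨁ i, Quiver.Path (v i) b →₀ N i) _) _ = _
  erw [DirectSum.toModule_lof]
  erw [LinearMap.comp_apply, Finsupp.lmapDomain_apply, Finsupp.mapDomain_single]

lemma sumRep_pact_lof_single (ι : Type) (v : ι → V) (N : ι → ModuleCat.{0} A)
    {a b : V} (p : Quiver.Path a b) (i : ι) (q : Quiver.Path (v i) a) (n : N i) :
    (sumRep ι v N).pact p
      (DirectSum.lof A ι (fun i' => Quiver.Path (v i') a →₀ N i') i
        (Finsupp.single q n)) =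
    DirectSum.lof A ι (fun i' => Quiver.Path (v i') b →₀ N i') i
      (Finsupp.single (q.comp p) n) := by
  induction p with
  | nil => simp; rfl
  | cons r e ih =>
      rw [QRep.pact_cons]
      exact (congrArg ((sumRep ι v N).act e) ih).trans (sumRep_act_lof_single ι v N e i _ n)

lemma canonicalApprox_lof_single (X : QRep A V) (w u : V)
    (p : Quiver.Path (id u) w) (x : X.M u) :
    canonicalApprox X w
      (DirectSum.lof A V
        (fun u' => Quiver.Path (id u') w →₀ (ModuleCat.of A (X.M u') : Type)) u
        (Finsupp.single p x)) = X.pact p x := by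
  rw [canonicalApprox]
  erw [DirectSum.toModule_lof, Finsupp.lsum_single]

/-- The `w`-component of the lift of `k : sumRep ι v N → X` through the
canonical approximation. -/
def liftApp (ι : Type) (v : ι → V) (N : ι → ModuleCat.{0} A) (X : QRep A V)
    (k : QHom (sumRep ι v N) X) (w : V) :
    (sumRep ι v N).M w →ₗ[A]
      (sumRep V id fun u => ModuleCat.of A (X.M u)).M w :=
  DirectSum.toModule A ι _ fun i =>
    Finsupp.lsum ℕ fun p : Quiver.Path (v i) w =>
      (DirectSum.lof A V
          (fun u' => Quiver.Path (id u') w →₀ (ModuleCat.of A (X.M u') : Type))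
          (v i)).comp
        ((Finsupp.lsingle p).comp
          ((k.app (v i)).comp
            ((DirectSum.lof A ι (fun i' => Quiver.Path (v i') (v i) →₀ N i') i).comp
              (Finsupp.lsingle Quiver.Path.nil))))

lemma liftApp_lof_single (ι : Type) (v : ι → V) (N : ι → ModuleCat.{0} A)
    (X : QRep A V) (k : QHom (sumRep ι v N) X) (w : V) (i : ι)
    (p : Quiver.Path (v i) w) (n : N i) :
    liftApp ι v N X k w
      (DirectSum.lof A ι (fun i' => Quiver.Path (v i') w →₀ N i') i
        (Finsupp.single p n)) =
    DirectSum.lof A V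
      (fun u' => Quiver.Path (id u') w →₀ (ModuleCat.of A (X.M u') : Type)) (v i)
      (Finsupp.single p
        (k.app (v i)
          (DirectSum.lof A ι (fun i' => Quiver.Path (v i') (v i) →₀ N i') i
            (Finsupp.single Quiver.Path.nil n)))) := by
  rw [liftApp]
  erw [DirectSum.toModule_lof, Finsupp.lsum_single]
  rfl

/-- The lift of a morphism `k : sumRep ι v N → X` through the canonical
approximation, as a morphism of representations. -/
def liftHom (ι : Type) (v : ι → V) (N : ι → ModuleCat.{0} A) (X : QRep A V)
    (k : QHom (sumRep ι v N) X) :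
    QHom (sumRep ι v N) (sumRep V id fun u => ModuleCat.of A (X.M u)) where
  app := liftApp ι v N X k
  natural := by
    intro a b e
    apply DirectSum.linearMap_ext
    intro i
    apply Finsupp.lhom_ext
    intro p n
    exact ((congrArg _ (liftApp_lof_single ι v N X k a i p n)).trans
      (sumRep_act_lof_single V id (fun u => ModuleCat.of A (X.M u)) e (v i) p _)).trans
      (((liftApp_lof_single ι v N X k b i (p.comp e.toPath) n).symm).trans
        (congrArg _ (sumRep_act_lof_single ι v N e i p n).symm))

lemma canonicalApprox_liftApp (ι : Type) (v : ι → V) (N : ι → ModuleCat.{0} A)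
    (X : QRep A V) (k : QHom (sumRep ι v N) X) (w : V)
    (y : (sumRep ι v N).M w) :
    canonicalApprox X w (liftApp ι v N X k w y) = k.app w y := by
  induction y using DirectSum.induction_on with
  | zero => exact (congrArg _ (map_zero _)).trans ((map_zero _).trans (map_zero _).symm)
  | of i f =>
      rw [← DirectSum.lof_eq_of A]
      induction f using Finsupp.induction_linear with
      | zero =>
          simp
          exact (congrArg _ (map_zero _)).trans ((map_zero _).trans (map_zero _).symm)
      | add f g hf hg =>
          rw [map_add]
          exact (congrArg _ (map_add _ _ _)).trans ((map_add _ _ _).trans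
            ((congrArg₂ (· + ·) hf hg).trans (map_add _ _ _).symm))
      | single p n =>
          refine ((congrArg _ (liftApp_lof_single ι v N X k w i p n)).trans
            (canonicalApprox_lof_single X w (v i) p _)).trans ?_
          refine ((QHom.pact_natural k p _).symm).trans ?_
          refine congrArg (k.app w) ?_
          refine (sumRep_pact_lof_single ι v N p i Quiver.Path.nil n).trans ?_
          rw [Quiver.Path.nil_comp]
  | add y z hy hz =>
    exact (congrArg _ (map_add _ _ _)).trans ((map_add _ _ _).trans
      ((congrArg₂ (· + ·) hy hz).trans (map_add _ _ _).symm))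

theorem canonical_right_approximation (R : Type) [Ring R] (hR : IsNoetherianRing Rᵐᵒᵖ)
    [Fintype V] [∀ a b : V, Fintype (a ⟶ b)]
    (hacyclic : ∀ (v : V) (p : Quiver.Path v v), p = Quiver.Path.nil)
    (X : QRep Rᵐᵒᵖ V) (hXfg : ∀ u, Module.Finite Rᵐᵒᵖ (X.M u)) :
    -- `f_X` is a morphism of representations ...
    (∀ {a b : V} (e : a ⟶ b),
      (X.act e).comp (canonicalApprox X a) =
        (canonicalApprox X b).comp
          ((sumRep V id (fun u => ModuleCat.of Rᵐᵒᵖ (X.M u))).act e)) ∧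
    -- ... and every morphism from an object of `M_R(Q)` factors through it.
    (∀ D : QRep Rᵐᵒᵖ V, MemMRQ D → ∀ h : QHom D X,
      ∃ u : QHom D (sumRep V id (fun u => ModuleCat.of Rᵐᵒᵖ (X.M u))),
        ∀ w x, canonicalApprox X w (u.app w x) = h.app w x) := by
  constructor
  · intro a b e
    apply DirectSum.linearMap_ext
    intro u
    apply Finsupp.lhom_ext
    intro p x
    simp only [LinearMap.comp_apply]
    refine (congrArg _ (canonicalApprox_lof_single X a u p x)).trans ?_
    refine Eq.trans ?_ (congrArg (canonicalApprox X b)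
      (sumRep_act_lof_single V id (fun u => ModuleCat.of Rᵐᵒᵖ (X.M u)) e u p x).symm)
    refine Eq.trans ?_ (canonicalApprox_lof_single X b u (p.comp e.toPath) x).symm
    rw [Quiver.Hom.toPath, Quiver.Path.comp_cons, Quiver.Path.comp_nil,
      QRep.pact_cons]
    rfl
  · rintro D ⟨ι, hι, v, N, hN, F, G, hGF, hFG⟩ h
    -- the composite `h ∘ G : sumRep ι v N → X`
    let k : QHom (sumRep ι v N) X :=
      { app := fun w => (h.app w).comp (G.app w)
        natural := by
          intro a b e
          rw [LinearMap.comp_assoc, ← G.natural e, ← LinearMap.comp_assoc,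
            h.natural e, LinearMap.comp_assoc] }
    let L := liftHom ι v N X k
    refine ⟨{ app := fun w => (L.app w).comp (F.app w)
              natural := ?_ }, ?_⟩
    · intro a b e
      rw [LinearMap.comp_assoc, ← F.natural e, ← LinearMap.comp_assoc,
        L.natural e, LinearMap.comp_assoc]
    · intro w x
      simp only [LinearMap.comp_apply]
      show canonicalApprox X w (liftApp ι v N X k w (F.app w x)) = _
      rw [canonicalApprox_liftApp]
      show h.app w (G.app w (F.app w x)) = h.app w x
      rw [hGF]

end
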